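/- Let Λ be a subshift and let x ∈ X_Λ and a word μ with μx ∈ X_Λ. If y ∈ X_Λ is l-past equivalent to x for l ≥ |μ| + k, then every word ν of length ≤ k with νμ appearing in Λ and ν(μx) ∈ X_Λ also satisfies ν(μy) ∈ X_Λ; in particular μy ∈ X_Λ and μx ∼_k μy whenever x ∼_{k+|μ|} y. -/

import Mathlib

open scoped Classical

variable {A : Type*}

/-- Prepend a finite word to a right-infinite sequence. -/
def prepend (μ : List A) (x : ℕ → A) : ℕ → A :=
  fun n => if h : n < μ.length then μ.get ⟨n, h⟩ else x (n - μ.length)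

/-- The one-sided shift map. -/
def shift (x : ℕ → A) : ℕ → A := fun n => x (n + 1)

/-- `Λ_l(x)`: words of length at most `l` that can precede `x` in `X`. -/
def pastSet (X : Set (ℕ → A)) (l : ℕ) (x : ℕ → A) : Set (List A) :=
  {μ | μ.length ≤ l ∧ prepend μ x ∈ X}

/-- The cylinder set `U_μ`. -/
def cyl (X : Set (ℕ → A)) (μ : List A) : Set (ℕ → A) :=
  {x | x ∈ X ∧ ∀ i : Fin μ.length, x i = μ.get i}

/-- `σ^{|μ|}(U_μ)`. -/
def shiftImg (X : Set (ℕ → A)) (μ : List A) : Set (ℕ → A) :=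
  shift^[μ.length] '' cyl X μ

/-- `μℰ = {μx ∈ X : x ∈ ℰ}`. -/
def wordAct (X : Set (ℕ → A)) (μ : List A) (E : Set (ℕ → A)) : Set (ℕ → A) :=
  {y | y ∈ X ∧ ∃ x ∈ E, y = prepend μ x}

/-- past equivalence is compatible with prepending words: if
`μx ∈ X_Λ` and `x ∼_{k+|μ|} y`, then every `ν` with `|ν| ≤ k` and
`ν(μx) ∈ X_Λ` satisfies `ν(μy) ∈ X_Λ`; in particular `μy ∈ X_Λ` and
`μx ∼_k μy`. -/
lemma prepend_prepend (ν μ : List A) (x : ℕ → A) :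
    prepend ν (prepend μ x) = prepend (ν ++ μ) x := by
  funext n
  simp only [prepend, List.length_append]
  by_cases h1 : n < ν.length
  · rw [dif_pos h1, dif_pos (lt_of_lt_of_le h1 (Nat.le_add_right _ _))]
    simp only [List.get_eq_getElem, List.getElem_append_left h1]
  · rw [dif_neg h1]
    by_cases h2 : n - ν.length < μ.length
    · rw [dif_pos h2, dif_pos (by omega)]
      simp only [List.get_eq_getElem]
      rw [List.getElem_append_right (by omega)]
    · rw [dif_neg h2, dif_neg (by omega)]
      congr 1
      omega

theorem past_equiv_prepend [Fintype A] (X : Set (ℕ → A))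
    (x y : ℕ → A) (hx : x ∈ X) (hy : y ∈ X) (μ : List A) (k : ℕ)
    (hμx : prepend μ x ∈ X)
    (h : pastSet X (k + μ.length) x = pastSet X (k + μ.length) y) :
    (∀ ν : List A, ν.length ≤ k → prepend ν (prepend μ x) ∈ X →
      prepend ν (prepend μ y) ∈ X) ∧
    prepend μ y ∈ X ∧
    pastSet X k (prepend μ x) = pastSet X k (prepend μ y) := by
  have key : ∀ ν : List A, ν.length ≤ k → prepend ν (prepend μ x) ∈ X →
      prepend ν (prepend μ y) ∈ X := by
    intro ν hν hνx
    rw [prepend_prepend] at hνx ⊢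
    have : (ν ++ μ) ∈ pastSet X (k + μ.length) x :=
      ⟨by simp; omega, hνx⟩
    rw [h] at this
    exact this.2
  have key' : ∀ ν : List A, ν.length ≤ k → prepend ν (prepend μ y) ∈ X →
      prepend ν (prepend μ x) ∈ X := by
    intro ν hν hνy
    rw [prepend_prepend] at hνy ⊢
    have : (ν ++ μ) ∈ pastSet X (k + μ.length) y :=
      ⟨by simp; omega, hνy⟩
    rw [← h] at this
    exact this.2
  have hμy : prepend μ y ∈ X := by
    have : μ ∈ pastSet X (k + μ.length) x := ⟨by omega, hμx⟩
    rw [h] at this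
    exact this.2
  refine ⟨key, hμy, ?_⟩
  ext ν
  exact ⟨fun ⟨h1, h2⟩ => ⟨h1, key ν h1 h2⟩, fun ⟨h1, h2⟩ => ⟨h1, key' ν h1 h2⟩⟩
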